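/- Let G be a finite simple graph and let n, m be integers with 0 < n ≤ m ≤ 2n. If iso(G−S) ≤ (m/n)|S| for all subsets S ⊆ V(G), then the independence number of G satisfies α(G) ≤ (m/(m+n))|V(G)|. -/
import Mathlib


open Finset

namespace SCF

variable {V : Type*}

/-- Degree of `v` in `F` (as the cardinality of its neighbor set). -/
noncomputable def deg [Fintype V] (F : SimpleGraph V) (v : V) : ℕ :=
  (F.neighborSet v).ncard

/-- Number of isolated vertices of `G - S`. -/
noncomputable def iso [Fintype V] (G : SimpleGraph V) (S : Set V) : ℕ :=
  {v | v ∉ S ∧ ∀ w, G.Adj v w → w ∈ S}.ncard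

/-- The component of `v` in `F` is a single edge `K_{1,1}`. -/
def IsK11Comp [Fintype V] (F : SimpleGraph V) (v : V) : Prop :=
  deg F v = 1 ∧ ∀ w, F.Adj v w → deg F w = 1

/-- The component of `v` in `F` is a path on three vertices `K_{1,2}`. -/
def IsK12Comp [Fintype V] (F : SimpleGraph V) (v : V) : Prop :=
  ∃ c a b, a ≠ b ∧ F.Adj c a ∧ F.Adj c b ∧ deg F c = 2 ∧ deg F a = 1 ∧ deg F b = 1 ∧
    (v = c ∨ v = a ∨ v = b)

/-- The component of `v` in `F` is a cycle (2-regular connected, so length ≥ 3). -/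
def IsCycleComp [Fintype V] (F : SimpleGraph V) (v : V) : Prop :=
  ∀ w, F.Reachable v w → deg F w = 2

/-- The component of `v` in `F` is an odd cycle. -/
def IsOddCycleComp [Fintype V] (F : SimpleGraph V) (v : V) : Prop :=
  IsCycleComp F v ∧ Odd {w | F.Reachable v w}.ncard

/-- The component of `v` in `F` is a star `K_{1,i}` for some `i ≥ 1`. -/
def IsStarComp [Fintype V] (F : SimpleGraph V) (v : V) : Prop :=
  ∃ c, (v = c ∨ F.Adj c v) ∧ 0 < deg F c ∧ ∀ w, F.Adj c w → deg F w = 1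

/-- The component of `v` in `F` is a star `K_{1,i}` with `1 ≤ i ≤ n`. -/
def IsStarAtMostComp [Fintype V] (F : SimpleGraph V) (n : ℕ) (v : V) : Prop :=
  ∃ c, (v = c ∨ F.Adj c v) ∧ 0 < deg F c ∧ deg F c ≤ n ∧ ∀ w, F.Adj c w → deg F w = 1

/-- `F` is a `{K_{1,1}, C_m : m ≥ 3}`-factor of `G`. -/
def IsK11CycleFactor [Fintype V] (G F : SimpleGraph V) : Prop :=
  F ≤ G ∧ ∀ v, IsK11Comp F v ∨ IsCycleComp F v

/-- `F` is a `{K_{1,1}, K_{1,2}, C_m : m ≥ 3}`-factor of `G`. -/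
def IsK11K12CycleFactor [Fintype V] (G F : SimpleGraph V) : Prop :=
  F ≤ G ∧ ∀ v, IsK11Comp F v ∨ IsK12Comp F v ∨ IsCycleComp F v

/-- Number of `K_{1,2}`-components of `F`, counted by their centers. -/
noncomputable def countK12 [Fintype V] (F : SimpleGraph V) : ℕ :=
  {v | deg F v = 2 ∧ ∀ w, F.Adj v w → deg F w = 1}.ncard

/-- `min(G, K_{1,2})`: the minimum number of `K_{1,2}`-components over all
`{K_{1,1}, K_{1,2}, C_m : m ≥ 3}`-factors of `G`. -/
noncomputable def minK12 [Fintype V] (G : SimpleGraph V) : ℕ :=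
  sInf {t | ∃ F, IsK11K12CycleFactor G F ∧ countK12 F = t}

/-- `f` is a fractional matching of `G`. -/
def IsFracMatching [Fintype V] [DecidableEq V] (G : SimpleGraph V) [DecidableRel G.Adj]
    (f : Sym2 V → ℝ) : Prop :=
  (∀ e, 0 ≤ f e ∧ f e ≤ 1) ∧ (∀ e, e ∉ G.edgeSet → f e = 0) ∧
    ∀ v : V, ∑ e ∈ G.edgeFinset, (if v ∈ e then f e else 0) ≤ 1

/-- Total weight of a fractional matching. -/
def weight [Fintype V] [DecidableEq V] (G : SimpleGraph V) [DecidableRel G.Adj]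
    (f : Sym2 V → ℝ) : ℝ :=
  ∑ e ∈ G.edgeFinset, f e

/-- The fractional matching number `μ_f(G)`. -/
noncomputable def nuF [Fintype V] [DecidableEq V] (G : SimpleGraph V) [DecidableRel G.Adj] : ℝ :=
  sSup (weight G '' {f | IsFracMatching G f})

/-- `f` is a maximum fractional matching of `G`. -/
def IsMaxFracMatching [Fintype V] [DecidableEq V] (G : SimpleGraph V) [DecidableRel G.Adj]
    (f : Sym2 V → ℝ) : Prop :=
  IsFracMatching G f ∧ weight G f = nuF G

/-- `s` is an independent set of vertices of `G`. -/
def IsIndepSet (G : SimpleGraph V) (s : Set V) : Prop :=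
  ∀ ⦃u⦄, u ∈ s → ∀ ⦃w⦄, w ∈ s → ¬ G.Adj u w

/-- The independence number `α(G)`. -/
noncomputable def alpha [Fintype V] (G : SimpleGraph V) : ℕ :=
  sSup {n | ∃ s : Set V, IsIndepSet G s ∧ s.ncard = n}

/-- `G` has a proper edge coloring with `k` colors. -/
def HasProperEdgeColoring (G : SimpleGraph V) (k : ℕ) : Prop :=
  ∃ c : Sym2 V → Fin k, ∀ e₁ ∈ G.edgeSet, ∀ e₂ ∈ G.edgeSet,
    e₁ ≠ e₂ → ∀ v : V, v ∈ e₁ → v ∈ e₂ → c e₁ ≠ c e₂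

/-- The chromatic index `χ'(G)`: the minimum number of colors (equivalently matchings)
needed to properly color the edges of `G`. -/
noncomputable def chromIdx (G : SimpleGraph V) : ℕ :=
  sInf {k | HasProperEdgeColoring G k}

/-- `G` is a `k`-critical graph. -/
def IsCriticalWith [Fintype V] (G : SimpleGraph V) [DecidableRel G.Adj] (k : ℕ) : Prop :=
  2 ≤ k ∧ G.maxDegree = k ∧ chromIdx G = k + 1 ∧
    ∀ H : SimpleGraph V, H < G → chromIdx H ≤ k

/-- `G` is an edge-chromatic critical graph. -/
def IsCritical [Fintype V] (G : SimpleGraph V) [DecidableRel G.Adj] : Prop :=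
  ∃ k, IsCriticalWith G k

/-- `G` is factor-critical: deleting any vertex leaves a graph with a perfect matching. -/
def IsFactorCritical (G : SimpleGraph V) : Prop :=
  ∀ v : V, ∃ M : G.Subgraph, M.verts = {v}ᶜ ∧ M.IsMatching

end SCF

open SCF

/-- if `0 < n ≤ m ≤ 2n` and `iso(G-S) ≤ (m/n)|S|` for all `S`, then
`α(G) ≤ (m/(m+n))|V(G)|`. -/
theorem stmt11 {V : Type*} [Fintype V] (G : SimpleGraph V) (n m : ℕ)
    (hn : 0 < n) (hnm : n ≤ m) (hm2n : m ≤ 2 * n)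
    (h : ∀ S : Set V, (iso G S : ℝ) ≤ ((m : ℝ) / (n : ℝ)) * (S.ncard : ℝ)) :
    (alpha G : ℝ) ≤ ((m : ℝ) / ((m : ℝ) + (n : ℝ))) * (Fintype.card V : ℝ) := by
  classical
  -- obtain a maximum independent set
  have hmem : alpha G ∈ {n | ∃ s : Set V, IsIndepSet G s ∧ s.ncard = n} := by
    apply Nat.sSup_mem
    · exact ⟨0, ∅, fun u hu => absurd hu (Set.notMem_empty u), by simp⟩
    · refine ⟨Fintype.card V, fun k hk => ?_⟩
      obtain ⟨s, -, rfl⟩ := hk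
      simpa [Set.ncard_univ] using Set.ncard_le_ncard (Set.subset_univ s) (Set.finite_univ)
  obtain ⟨s, hs, hcard⟩ := hmem
  have hsub : s ⊆ {v | v ∉ sᶜ ∧ ∀ w, G.Adj v w → w ∈ sᶜ} := by
    intro v hv
    refine ⟨by simpa using hv, fun w hw => ?_⟩
    intro hws
    exact hs hv hws hw
  have h1 : alpha G ≤ iso G sᶜ := by
    rw [← hcard]
    exact Set.ncard_le_ncard hsub (Set.toFinite _)
  have h2 : (sᶜ : Set V).ncard = Fintype.card V - alpha G := by
    have := Set.ncard_add_ncard_compl s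
    rw [hcard, Nat.card_eq_fintype_card] at this
    omega
  have hαle : alpha G ≤ Fintype.card V := by
    rw [← hcard]
    simpa [Set.ncard_univ] using Set.ncard_le_ncard (Set.subset_univ s) (Set.finite_univ)
  have h3 : (alpha G : ℝ) ≤ ((m : ℝ) / n) * ((Fintype.card V : ℝ) - alpha G) := by
    have := h sᶜ
    rw [h2] at this
    have hcast : ((Fintype.card V - alpha G : ℕ) : ℝ) = (Fintype.card V : ℝ) - alpha G := by
      push_cast [Nat.cast_sub hαle]
      ring
    rw [hcast] at this
    exact le_trans (by exact_mod_cast h1) this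
  have hn' : (0 : ℝ) < n := by exact_mod_cast hn
  have hmn : (0 : ℝ) < (m : ℝ) + n := by positivity
  rw [div_mul_eq_mul_div, le_div_iff₀ hmn]
  rw [div_mul_eq_mul_div, le_div_iff₀ hn'] at h3
  nlinarith [h3]
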